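/- Vanishing first kernel moment (constant A₂ of order h^{d+2}): as h → 0⁺, the ℝ^D-valued integral h^{-(d+1)} ∫_{B̄(0,r)} K((φ(z) − x)/h) (φ(z) − x) f(z) dz converges to 0; equivalently, ∫_{B̄(0,r)} K((φ(z) − x)/h)(φ(z) − x) f(z) dz = O(h^{d+2}). -/

import Mathlib

open MeasureTheory Metric Filter

set_option maxHeartbeats 1000000 in
/-- Vanishing first kernel moment (constant A₂ of order `h^(d+2)`): as `h → 0⁺`,
`h^(-(d+1)) ∫_{B̄(0,r)} K((φ z − x)/h) (φ z − x) f z dz → 0` in `ℝ^D`. -/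
theorem kernel_first_moment_vanishes
    (d D : ℕ) (hd : 0 < d) (hdD : d ≤ D) (r : ℝ) (hr : 0 < r)
    (φ : EuclideanSpace ℝ (Fin d) → EuclideanSpace ℝ (Fin D))
    (hφ : ContDiff ℝ 2 φ)
    (c C : ℝ) (hc : 0 < c) (hcC : c ≤ C)
    (hbil : ∀ z ∈ closedBall (0 : EuclideanSpace ℝ (Fin d)) r,
      ∀ z' ∈ closedBall (0 : EuclideanSpace ℝ (Fin d)) r,
        c * ‖z - z'‖ ≤ ‖φ z - φ z'‖ ∧ ‖φ z - φ z'‖ ≤ C * ‖z - z'‖)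
    (hL : Function.Injective (fderiv ℝ φ 0))
    (f : EuclideanSpace ℝ (Fin d) → ℝ)
    (hf_smooth : ContDiff ℝ 1 f)
    (hf_nonneg : ∀ z, 0 ≤ f z)
    (hf_supp : ∀ z ∉ closedBall (0 : EuclideanSpace ℝ (Fin d)) r, f z = 0)
    (hf_bdd : ∃ M : ℝ, ∀ z, f z ≤ M)
    (hf_prob : ∫ z, f z = 1)
    (hf_pos : 0 < f 0)
    (K : EuclideanSpace ℝ (Fin D) → ℝ)
    (hK_nonneg : ∀ u, 0 ≤ K u) (hK_cont : Continuous K)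
    (hK_supp : HasCompactSupport K)
    (hK_radial : ∀ u v, ‖u‖ = ‖v‖ → K u = K v) :
    Tendsto
      (fun h : ℝ =>
        (h ^ (d + 1))⁻¹ •
          ∫ z in closedBall (0 : EuclideanSpace ℝ (Fin d)) r,
            (K (h⁻¹ • (φ z - φ 0)) * f z) • (φ z - φ 0))
      (nhdsWithin 0 (Set.Ioi 0))
      (nhds (0 : EuclideanSpace ℝ (Fin D))) := by
  classical
  have hφc : Continuous φ := hφ.continuous
  have hfc : Continuous f := hf_smooth.continuous
  -- radius of the support of K
  obtain ⟨R₀, hR₀⟩ : ∃ R₀ : ℝ, tsupport K ⊆ closedBall 0 R₀ :=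
    hK_supp.isBounded.subset_closedBall 0
  set R : ℝ := max R₀ 1 with hRdef
  have hR0 : (0:ℝ) < R := lt_of_lt_of_le one_pos (le_max_right _ _)
  have hKR : ∀ u : EuclideanSpace ℝ (Fin D), R < ‖u‖ → K u = 0 := by
    intro u hu
    apply image_eq_zero_of_notMem_tsupport
    intro hmem
    have h1 := hR₀ hmem
    rw [mem_closedBall, dist_zero_right] at h1
    exact absurd (h1.trans (le_max_left _ _)) (not_le.2 hu)
  -- bound on K
  obtain ⟨Kb, hKb⟩ := hK_cont.bounded_above_of_compact_support hK_supp
  have hKb' : ∀ u, K u ≤ Kb := fun u => (le_abs_self _).trans (hKb u)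
  have hKb0 : 0 ≤ Kb := le_trans (hK_nonneg 0) (hKb' 0)
  -- bound on f
  obtain ⟨M₀, hM₀⟩ := hf_bdd
  set M : ℝ := max M₀ 0 with hMdef
  have hM0 : 0 ≤ M := le_max_right _ _
  have hM : ∀ z, f z ≤ M := fun z => (hM₀ z).trans (le_max_left _ _)
  set L := fderiv ℝ φ 0 with hLdef
  -- the rescaled integrand
  set G : ℝ → EuclideanSpace ℝ (Fin d) → EuclideanSpace ℝ (Fin D) :=
    fun h w => (K (h⁻¹ • (φ (h • w) - φ 0)) * f (h • w)) • (h⁻¹ • (φ (h • w) - φ 0))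
    with hGdef
  -- the limit integrand
  set g : EuclideanSpace ℝ (Fin d) → EuclideanSpace ℝ (Fin D) :=
    fun w => (K (L w) * f 0) • (L w) with hgdef
  -- key rescaling identity
  have key : ∀ h : ℝ, h ∈ Set.Ioi (0:ℝ) →
      (fun h : ℝ =>
        (h ^ (d + 1))⁻¹ •
          ∫ z in closedBall (0 : EuclideanSpace ℝ (Fin d)) r,
            (K (h⁻¹ • (φ z - φ 0)) * f z) • (φ z - φ 0)) h
        = ∫ w, G h w := by
    intro h hh
    rw [Set.mem_Ioi] at hh
    set F : EuclideanSpace ℝ (Fin d) → EuclideanSpace ℝ (Fin D) :=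
      fun z => (K (h⁻¹ • (φ z - φ 0)) * f z) • (φ z - φ 0) with hFdef
    have h1 : ∫ z in closedBall (0 : EuclideanSpace ℝ (Fin d)) r, F z = ∫ z, F z :=
      setIntegral_eq_integral_of_forall_compl_eq_zero (fun z hz => by
        simp [hFdef, hf_supp z hz])
    have h2 : ∫ x, F (h • x) = (h ^ d)⁻¹ • ∫ x, F x := by
      have := MeasureTheory.Measure.integral_comp_smul_of_nonneg
        (μ := (volume : Measure (EuclideanSpace ℝ (Fin d)))) F h (hR := hh.le)
      rwa [finrank_euclideanSpace_fin] at this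
    have hhd : (h:ℝ) ^ d ≠ 0 := pow_ne_zero _ hh.ne'
    have h3 : ∫ z, F z = (h ^ d) • ∫ x, F (h • x) := by
      rw [h2, smul_smul, mul_inv_cancel₀ hhd, one_smul]
    show (h ^ (d + 1))⁻¹ • ∫ z in closedBall (0 : EuclideanSpace ℝ (Fin d)) r, F z
        = ∫ w, G h w
    rw [h1, h3, smul_smul]
    have h4 : (h ^ (d + 1))⁻¹ * h ^ d = h⁻¹ := by
      rw [pow_succ]
      field_simp
    rw [h4, ← integral_smul]
    congr 1
    funext w
    show h⁻¹ • ((K (h⁻¹ • (φ (h • w) - φ 0)) * f (h • w)) • (φ (h • w) - φ 0)) = G h w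
    rw [smul_comm]
  -- pointwise convergence
  have h_lim : ∀ w, Tendsto (fun h : ℝ => G h w) (nhdsWithin 0 (Set.Ioi 0)) (nhds (g w)) := by
    intro w
    have hder : HasDerivAt (fun t : ℝ => φ (t • w)) (L w) 0 := by
      have h1 : HasFDerivAt φ L ((fun t : ℝ => t • w) 0) := by
        rw [show (fun t : ℝ => t • w) 0 = 0 by simp]
        exact (hφ.differentiable (by norm_num) 0).hasFDerivAt
      have h2 : HasDerivAt (fun t : ℝ => t • w) w 0 := by
        simpa using (hasDerivAt_id (0:ℝ)).smul_const w
      exact h1.comp_hasDerivAt 0 h2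
    have hu : Tendsto (fun h : ℝ => h⁻¹ • (φ (h • w) - φ 0)) (nhdsWithin 0 (Set.Ioi 0))
        (nhds (L w)) := by
      have := hder.tendsto_slope_zero
      simp only [zero_add, zero_smul] at this
      exact this.mono_left (nhdsWithin_mono 0 (fun x hx => ne_of_gt hx))
    have hsw : Tendsto (fun h : ℝ => h • w) (nhdsWithin 0 (Set.Ioi 0))
        (nhds (0 : EuclideanSpace ℝ (Fin d))) := by
      have : Tendsto (fun h : ℝ => h • w) (nhds 0) (nhds ((0:ℝ) • w)) :=
        (continuous_id.smul continuous_const).tendsto 0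
      rw [zero_smul] at this
      exact this.mono_left nhdsWithin_le_nhds
    have hfw : Tendsto (fun h : ℝ => f (h • w)) (nhdsWithin 0 (Set.Ioi 0)) (nhds (f 0)) :=
      (hfc.tendsto 0).comp hsw
    have hKu : Tendsto (fun h : ℝ => K (h⁻¹ • (φ (h • w) - φ 0)))
        (nhdsWithin 0 (Set.Ioi 0)) (nhds (K (L w))) := (hK_cont.tendsto _).comp hu
    exact (hKu.mul hfw).smul hu
  -- the dominating function
  set bound : EuclideanSpace ℝ (Fin d) → ℝ :=
    (closedBall (0 : EuclideanSpace ℝ (Fin d)) (R / c)).indicator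
      (fun _ => Kb * (M * (C * (R / c)))) with hbdef
  have hCpos : 0 < C := lt_of_lt_of_le hc hcC
  have hRc : 0 < R / c := div_pos hR0 hc
  have hconst : 0 ≤ Kb * (M * (C * (R / c))) := by positivity
  -- bound estimate
  have h_bound : ∀ h : ℝ, h ∈ Set.Ioi (0:ℝ) → ∀ w, ‖G h w‖ ≤ bound w := by
    intro h hh w
    rw [Set.mem_Ioi] at hh
    set u : EuclideanSpace ℝ (Fin D) := h⁻¹ • (φ (h • w) - φ 0) with hudef
    have hub : f (h • w) ≠ 0 → c * ‖w‖ ≤ ‖u‖ ∧ ‖u‖ ≤ C * ‖w‖ := by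
      intro hfw
      have hwr : h • w ∈ closedBall (0 : EuclideanSpace ℝ (Fin d)) r := by
        by_contra hcon
        exact hfw (hf_supp _ hcon)
      obtain ⟨hlow, hup⟩ := hbil (h • w) hwr 0 (mem_closedBall_self hr.le)
      have hnsw : ‖h • w - 0‖ = h * ‖w‖ := by
        rw [sub_zero, norm_smul, Real.norm_eq_abs, abs_of_pos hh]
      rw [hnsw] at hlow hup
      have hnu : ‖u‖ = h⁻¹ * ‖φ (h • w) - φ 0‖ := by
        rw [hudef, norm_smul, Real.norm_eq_abs, abs_of_pos (inv_pos.2 hh)]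
      constructor
      · rw [hnu]
        calc c * ‖w‖ = h⁻¹ * (c * (h * ‖w‖)) := by
              rw [show h⁻¹ * (c * (h * ‖w‖)) = (h⁻¹ * h) * (c * ‖w‖) by ring,
                inv_mul_cancel₀ hh.ne', one_mul]
          _ ≤ h⁻¹ * ‖φ (h • w) - φ 0‖ :=
              mul_le_mul_of_nonneg_left hlow (inv_pos.2 hh).le
      · rw [hnu]
        calc h⁻¹ * ‖φ (h • w) - φ 0‖ ≤ h⁻¹ * (C * (h * ‖w‖)) :=
              mul_le_mul_of_nonneg_left hup (inv_pos.2 hh).le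
          _ = C * ‖w‖ := by
              rw [show h⁻¹ * (C * (h * ‖w‖)) = (h⁻¹ * h) * (C * ‖w‖) by ring,
                inv_mul_cancel₀ hh.ne', one_mul]
    by_cases hw : w ∈ closedBall (0 : EuclideanSpace ℝ (Fin d)) (R / c)
    · rw [hbdef, Set.indicator_of_mem hw]
      by_cases hfw : f (h • w) = 0
      · simp only [hGdef, hfw, mul_zero, zero_smul, norm_zero]
        exact hconst
      · obtain ⟨_, hup⟩ := hub hfw
        have hwn : ‖w‖ ≤ R / c := by
          rw [mem_closedBall, dist_zero_right] at hw; exact hw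
        have hGn : ‖G h w‖ = K u * f (h • w) * ‖u‖ := by
          rw [hGdef]
          simp only [norm_smul, Real.norm_eq_abs, abs_mul,
            abs_of_nonneg (hK_nonneg u), abs_of_nonneg (hf_nonneg (h • w))]
          rw [abs_of_pos (inv_pos.2 hh),
            show ‖u‖ = h⁻¹ * ‖φ (h • w) - φ 0‖ from by
              rw [hudef, norm_smul, Real.norm_eq_abs, abs_of_pos (inv_pos.2 hh)]]
          rw [hudef, abs_of_nonneg (hK_nonneg _)]
        rw [hGn]
        have h5 : ‖u‖ ≤ C * (R / c) :=
          hup.trans (mul_le_mul_of_nonneg_left hwn hCpos.le)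
        have h6 : K u * f (h • w) ≤ Kb * M :=
          mul_le_mul (hKb' u) (hM _) (hf_nonneg _) hKb0
        calc K u * f (h • w) * ‖u‖ ≤ (Kb * M) * (C * (R / c)) :=
              mul_le_mul h6 h5 (norm_nonneg u) (by positivity)
          _ = Kb * (M * (C * (R / c))) := by ring
    · rw [hbdef, Set.indicator_of_notMem hw]
      by_cases hfw : f (h • w) = 0
      · simp [hGdef, hfw]
      · obtain ⟨hlow, _⟩ := hub hfw
        have hwn : R / c < ‖w‖ := by
          rw [mem_closedBall, dist_zero_right, not_le] at hw; exact hw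
        have hRu : R < ‖u‖ := by
          have h7 : R < ‖w‖ * c := (div_lt_iff₀ hc).1 hwn
          nlinarith
        simp [hGdef, hKR u hRu, ← hudef]
  -- integrability of the bound
  have hbint : Integrable bound := by
    rw [hbdef, integrable_indicator_iff measurableSet_closedBall]
    exact integrableOn_const measure_closedBall_lt_top.ne
  -- the limit integral vanishes
  have hzero : ∫ w, g w = 0 := by
    have hodd : ∀ w, g (-w) = - g w := by
      intro w
      have h1 : L (-w) = -(L w) := map_neg L w
      have h2 : K (-(L w)) = K (L w) := hK_radial _ _ (norm_neg _)
      simp [hgdef, h1, h2, smul_neg]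
    have hneg : ∫ w, g w = - ∫ w, g w := by
      conv_lhs => rw [← integral_neg_eq_self g (volume : Measure (EuclideanSpace ℝ (Fin d)))]
      simp_rw [hodd]
      exact integral_neg g
    have h2 : (2:ℝ) • ∫ w, g w = 0 := by
      rw [two_smul]
      nth_rewrite 1 [hneg]
      simp
    rcases smul_eq_zero.1 h2 with h | h
    · norm_num at h
    · exact h
  -- dominated convergence
  have main : Tendsto (fun h : ℝ => ∫ w, G h w) (nhdsWithin 0 (Set.Ioi 0))
      (nhds (∫ w, g w)) := by
    apply tendsto_integral_filter_of_dominated_convergence bound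
    · refine Eventually.of_forall (fun h => Continuous.aestronglyMeasurable ?_)
      have c1 : Continuous fun w : EuclideanSpace ℝ (Fin d) =>
          h⁻¹ • (φ (h • w) - φ 0) :=
        by fun_prop
      exact ((hK_cont.comp c1).mul (hfc.comp (continuous_const_smul h))).smul c1
    · exact eventually_mem_nhdsWithin.mono (fun h hh =>
        Eventually.of_forall (h_bound h hh))
    · exact hbint
    · exact Eventually.of_forall (fun w => h_lim w)
  rw [hzero] at main
  exact main.congr' (eventually_mem_nhdsWithin.mono (fun h hh => (key h hh).symm))
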